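/- Let ψ and θ be real numbers with 1 < ψ ≤ θ. Let (n_i)_{i≥1} be a strictly increasing sequence of positive integers and let (ε_i)_{i≥1} be a sequence of integers such that n_i + ε_i ≥ 1 for all i and ε_i/n_i → 0 as i → ∞. If M_ψ(n_i + ε_i) = M_θ(n_i) for all sufficiently large i (in particular, both values are finite), then ψ = θ. -/

import Mathlib

open Real
open Filter

/-- `M θ n = ⌊1 / {θ^(1/n)}⌋`, the integer part of the reciprocal of the
fractional part of the `n`-th root of `θ`. -/
noncomputable def M (θ : ℝ) (n : ℕ) : ℤ := ⌊1 / Int.fract (θ ^ ((n : ℝ)⁻¹))⌋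

lemma M_tendsto (θ : ℝ) (hθ : 1 < θ) :
    Tendsto (fun n : ℕ => (M θ n : ℝ) / n) atTop (nhds (1 / Real.log θ)) := by
  have hθ0 : (0:ℝ) < θ := lt_trans one_pos hθ
  have hlog : 0 < Real.log θ := Real.log_pos hθ
  set t : ℕ → ℝ := fun n => Real.log θ * (n:ℝ)⁻¹ with ht
  -- t n → 0
  have ht0 : Tendsto t atTop (nhds 0) := by
    have := tendsto_one_div_atTop_nhds_zero_nat.const_mul (Real.log θ)
    simpa [ht, one_div] using this
  -- t n → 0 within {0}ᶜ
  have ht0' : Tendsto t atTop (nhdsWithin 0 {0}ᶜ) := by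
    apply tendsto_nhdsWithin_of_tendsto_nhds_of_eventually_within _ ht0
    filter_upwards [eventually_gt_atTop 0] with k hk
    have : (0:ℝ) < (k:ℝ)⁻¹ := by positivity
    simp only [Set.mem_compl_iff, Set.mem_singleton_iff]
    positivity
  -- rpow rewriting
  have hrpow : ∀ k : ℕ, θ ^ ((k:ℝ)⁻¹) = Real.exp (t k) := by
    intro k
    rw [Real.rpow_def_of_pos hθ0]
  -- slope limit
  have hslope : Tendsto (fun k : ℕ => (Real.exp (t k) - 1) / t k) atTop (nhds 1) := by
    have h := (Real.hasDerivAt_exp 0)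
    rw [hasDerivAt_iff_tendsto_slope] at h
    have := h.comp ht0'
    simp only [Real.exp_zero] at this
    refine this.congr fun k => ?_
    simp [slope_def_field]
  -- n * (θ^{1/n} - 1) → log θ
  have hmul : Tendsto (fun k : ℕ => (k:ℝ) * (θ ^ ((k:ℝ)⁻¹) - 1)) atTop (nhds (Real.log θ)) := by
    have := hslope.mul_const (Real.log θ)
    rw [one_mul] at this
    refine this.congr' ?_
    filter_upwards [eventually_gt_atTop 0] with k hk
    have hk0 : ((k:ℝ)) ≠ 0 := Nat.cast_ne_zero.2 hk.ne'
    rw [hrpow]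
    field_simp [ht]
    have htk : t k * (k:ℝ) = Real.log θ := inv_mul_cancel_right₀ hk0 _
    linear_combination (1 - Real.exp (t k)) * htk
  -- 1/(n * (θ^{1/n}-1)) → 1/log θ
  have hinv : Tendsto (fun k : ℕ => 1 / ((k:ℝ) * (θ ^ ((k:ℝ)⁻¹) - 1))) atTop (nhds (1 / Real.log θ)) := by
    simpa [one_div] using hmul.inv₀ hlog.ne'
  -- eventually θ^{1/n} < 2 and fract = θ^{1/n} - 1
  have hexp1 : Tendsto (fun k : ℕ => θ ^ ((k:ℝ)⁻¹)) atTop (nhds 1) := by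
    simp only [hrpow]
    have := (Real.continuous_exp.tendsto 0).comp ht0
    rw [Real.exp_zero] at this
    exact this
  have hlt2 : ∀ᶠ k : ℕ in atTop, θ ^ ((k:ℝ)⁻¹) < 2 := hexp1.eventually (eventually_lt_nhds one_lt_two)
  have hgt1 : ∀ᶠ k : ℕ in atTop, 1 < θ ^ ((k:ℝ)⁻¹) := by
    filter_upwards [eventually_gt_atTop 0] with k hk
    have : (0:ℝ) < (k:ℝ)⁻¹ := by positivity
    exact Real.one_lt_rpow_iff_of_pos hθ0 |>.2 (Or.inl ⟨hθ, this⟩)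
  have hfract : ∀ᶠ k : ℕ in atTop, Int.fract (θ ^ ((k:ℝ)⁻¹)) = θ ^ ((k:ℝ)⁻¹) - 1 := by
    filter_upwards [hlt2, hgt1] with k h2 h1
    have : ⌊θ ^ ((k:ℝ)⁻¹)⌋ = 1 := by
      rw [Int.floor_eq_iff]
      constructor
      · exact_mod_cast h1.le
      · push_cast; linarith
    rw [Int.fract, this]
    norm_num
  -- squeeze
  have hM_eq : ∀ᶠ k in atTop, (M θ k : ℝ) = ⌊1 / (θ ^ ((k:ℝ)⁻¹) - 1)⌋ := by
    filter_upwards [hfract] with k hf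
    rw [M, hf]
  have hupper : Tendsto (fun k : ℕ => (1 / (θ ^ ((k:ℝ)⁻¹) - 1)) / k) atTop (nhds (1 / Real.log θ)) := by
    refine hinv.congr' ?_
    filter_upwards [eventually_gt_atTop 0] with k hk
    rw [div_div, mul_comm]
  have hlower : Tendsto (fun k : ℕ => (1 / (θ ^ ((k:ℝ)⁻¹) - 1)) / k - 1 / k) atTop (nhds (1 / Real.log θ)) := by
    simpa using hupper.sub tendsto_one_div_atTop_nhds_zero_nat
  refine tendsto_of_tendsto_of_tendsto_of_le_of_le' hlower hupper ?_ ?_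
  · filter_upwards [hM_eq, eventually_gt_atTop 0] with k he hk
    have hk0 : (0:ℝ) < (k:ℝ) := by positivity
    rw [he, div_sub_div_same]
    gcongr
    linarith [Int.sub_one_lt_floor (1 / (θ ^ ((k:ℝ)⁻¹) - 1))]
  · filter_upwards [hM_eq, eventually_gt_atTop 0] with k he hk
    have hk0 : (0:ℝ) < (k:ℝ) := by positivity
    rw [he]
    gcongr
    exact Int.floor_le _

theorem stmt_4 (ψ θ : ℝ) (hψ : 1 < ψ) (hψθ : ψ ≤ θ)
    (n : ℕ → ℕ) (hn : StrictMono n) (hn1 : ∀ i, 1 ≤ n i)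
    (ε : ℕ → ℤ) (hnε : ∀ i, 1 ≤ (n i : ℤ) + ε i)
    (hε : Filter.Tendsto (fun i => (ε i : ℝ) / (n i : ℝ)) Filter.atTop (nhds 0))
    (hM : ∀ᶠ i in Filter.atTop, M ψ ((n i : ℤ) + ε i).toNat = M θ (n i)) :
    ψ = θ := by
  have hθ : 1 < θ := lt_of_lt_of_le hψ hψθ
  have hψ0 : (0:ℝ) < ψ := lt_trans one_pos hψ
  have hθ0 : (0:ℝ) < θ := lt_trans one_pos hθ
  set m : ℕ → ℕ := fun i => ((n i : ℤ) + ε i).toNat with hm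
  have hmcast : ∀ i, (m i : ℝ) = (n i : ℝ) + (ε i : ℝ) := by
    intro i
    have h : ((m i : ℤ)) = (n i : ℤ) + ε i := Int.toNat_of_nonneg (le_trans zero_le_one (hnε i))
    have h2 := congrArg (fun z : ℤ => (z : ℝ)) h
    push_cast at h2
    exact h2
  have hnne : ∀ i, ((n i : ℝ)) ≠ 0 := fun i => by
    have := hn1 i; positivity
  have hratio : Tendsto (fun i => (m i : ℝ) / (n i : ℝ)) atTop (nhds 1) := by
    have := hε.const_add 1
    rw [add_zero] at this
    refine this.congr fun i => ?_
    rw [hmcast i, add_div, div_self (hnne i)]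
  have hntop : Tendsto (fun i => (n i : ℝ)) atTop atTop :=
    tendsto_natCast_atTop_atTop.comp hn.tendsto_atTop
  have hm_top : Tendsto m atTop atTop := by
    rw [← tendsto_natCast_atTop_iff (R := ℝ)]
    have half : Tendsto (fun i => (1/2 : ℝ) * (n i : ℝ)) atTop atTop :=
      hntop.const_mul_atTop (by norm_num)
    refine tendsto_atTop_mono' _ ?_ half
    filter_upwards [hratio.eventually (eventually_ge_nhds (by norm_num : (1/2:ℝ) < 1)),
      eventually_ge_atTop 0] with i hi _
    have hnpos : (0:ℝ) < (n i : ℝ) := by have := hn1 i; positivity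
    exact (le_div_iff₀ hnpos).1 hi
  have hψlim := (M_tendsto ψ hψ).comp hm_top
  have hθlim := (M_tendsto θ hθ).comp hn.tendsto_atTop
  have key : Tendsto (fun i => (M θ (n i) : ℝ) / (n i)) atTop (nhds (1 / Real.log ψ)) := by
    have h1 : Tendsto (fun i => (M θ (n i) : ℝ) / (m i)) atTop (nhds (1 / Real.log ψ)) := by
      refine hψlim.congr' ?_
      filter_upwards [hM] with i hi
      simp only [Function.comp, hm]
      rw [hi]
    have h2 := h1.mul hratio
    rw [mul_one] at h2
    refine h2.congr' ?_
    filter_upwards [hm_top.eventually_ge_atTop 1] with i hi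
    have hmne : ((m i : ℝ)) ≠ 0 := by
      have : (0:ℕ) < m i := hi
      positivity
    field_simp
  have heq : 1 / Real.log θ = 1 / Real.log ψ := tendsto_nhds_unique hθlim key
  rw [one_div, one_div, inv_inj] at heq
  rw [← Real.exp_log hψ0, ← Real.exp_log hθ0, heq]
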